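/- Let (X, Y) be a random vector on [1,∞) × ℝ^{d-1} with x-survival function F̄(x,y) = Pr(X ≥ x, Y ≤ y) and F̄_X > 0. Suppose the conditional law of (X/t, Y) given X ≥ t converges weakly to a probability distribution ν on [1,∞) × ℝ^{d-1} whose first marginal ν_X is not the Dirac mass at 1. Then ν = P_α × H for some α > 0 and some probability distribution H on ℝ^{d-1}, where P_α is the Pareto distribution with survival function x^{-α} on [1,∞); in particular the two components of ν are independent. -/

import Mathlib

open Filter Topology MeasureTheory ProbabilityTheory Set
open scoped ENNReal NNReal

section Helpers

lemma exists_Ioo_notMem {C : Set ℝ} (hC : C.Countable) {x y : ℝ} (hxy : x < y) :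
    ∃ z, x < z ∧ z < y ∧ z ∉ C := by
  by_contra h
  push_neg at h
  have hsub : Ioo x y ⊆ C := fun z hz => h z hz.1 hz.2
  have hcnt : (Ioo x y).Countable := hC.mono hsub
  have := hcnt.le_aleph0
  rw [Cardinal.mk_Ioo_real hxy] at this
  exact absurd this (not_le.mpr Cardinal.aleph0_lt_continuum)

lemma exists_seq_anti_notMem (C : ℕ → Set ℝ) (hC : ∀ n, (C n).Countable) (x : ℝ) :
    ∃ u : ℕ → ℝ, (∀ n, x < u n) ∧ (∀ n, u n ∉ C n) ∧ (∀ n, u (n + 1) < u n)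
      ∧ (∀ n, u n < x + 1 / (n + 1)) := by
  have key : ∀ (n : ℕ) (y : ℝ), x < y →
      ∃ z, x < z ∧ z < y ∧ z < x + 1 / (n + 1) ∧ z ∉ C n := by
    intro n y hy
    have hpos : (0:ℝ) < 1 / (n + 1) := by positivity
    have hm : x < min y (x + 1 / (n + 1)) := lt_min hy (by linarith)
    obtain ⟨z, hz1, hz2, hz3⟩ := exists_Ioo_notMem (hC n) hm
    exact ⟨z, hz1, lt_of_lt_of_le hz2 (min_le_left _ _),
      lt_of_lt_of_le hz2 (min_le_right _ _), hz3⟩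
  choose! f hf1 hf2 hf3 hf4 using key
  set u : ℕ → ℝ := fun n => Nat.rec (f 0 (x + 1)) (fun n p => f (n + 1) p) n with hu
  have hu0 : u 0 = f 0 (x + 1) := rfl
  have husucc : ∀ n, u (n + 1) = f (n + 1) (u n) := fun n => rfl
  have main : ∀ n, x < u n ∧ u n ∉ C n ∧ u n < x + 1 / (n + 1) := by
    intro n
    induction n with
    | zero =>
        have h1 : x < x + 1 := by linarith
        exact ⟨by rw [hu0]; exact hf1 0 _ h1, by rw [hu0]; exact hf4 0 _ h1,
          by rw [hu0]; exact_mod_cast hf3 0 _ h1⟩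
    | succ n ih =>
        have h1 := ih.1
        refine ⟨by rw [husucc]; exact hf1 (n + 1) _ h1,
          by rw [husucc]; exact hf4 (n + 1) _ h1, ?_⟩
        rw [husucc]
        exact_mod_cast hf3 (n + 1) _ h1
  refine ⟨u, fun n => (main n).1, fun n => (main n).2.1, fun n => ?_, fun n => (main n).2.2⟩
  rw [husucc]
  exact hf2 (n + 1) _ (main n).1

lemma rat_cast_pos {q : ℚ} (h : (0:ℝ) < (q:ℝ)) : 0 < q := by exact_mod_cast h

lemma mult_antitone_eq_rpow (f : ℝ → ℝ)
    (f1 : f 1 = 1)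
    (hmult : ∀ x, 1 ≤ x → ∀ y, 1 ≤ y → f (x * y) = f x * f y)
    (hanti : ∀ x y, 1 ≤ x → x ≤ y → f y ≤ f x)
    (hpos : ∀ x, 1 ≤ x → 0 < f x)
    {u : ℝ} (hu1 : 1 < u) (hufl : f u < 1) :
    ∃ α : ℝ, 0 < α ∧ ∀ x, 1 ≤ x → f x = x ^ (-α) := by
  have hu0 : (0:ℝ) < u := lt_trans one_pos hu1
  set c := f u with hc
  have hc0 : 0 < c := hpos u hu1.le
  have step_pow : ∀ z : ℝ, 1 ≤ z → ∀ n : ℕ, f (z ^ n) = f z ^ n := by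
    intro z hz n
    induction n with
    | zero => simpa using f1
    | succ n ih =>
        have hzn : (1:ℝ) ≤ z ^ n := one_le_pow₀ hz
        rw [pow_succ, pow_succ, hmult _ hzn _ hz, ih]
  have one_le_rpow' : ∀ y : ℝ, 0 ≤ y → 1 ≤ u ^ y := fun y hy => Real.one_le_rpow hu1.le hy
  have step_rat : ∀ q : ℚ, 0 ≤ (q:ℝ) → f (u ^ (q:ℝ)) = c ^ (q:ℝ) := by
    intro q hq
    rcases eq_or_lt_of_le hq with hq0 | hq0
    · rw [← hq0, Real.rpow_zero, Real.rpow_zero, f1]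
    have hqpos : 0 < q := rat_cast_pos hq0
    set z := u ^ (q:ℝ) with hzdef
    have hz1 : 1 ≤ z := one_le_rpow' _ hq
    have hz0 : 0 < z := lt_of_lt_of_le one_pos hz1
    set p := q.num.toNat with hp
    set d := q.den with hd
    have hd0 : (0:ℝ) < (d:ℝ) := by
      have := q.den_pos
      exact_mod_cast this
    have hpq : ((p:ℝ)) = (q.num : ℝ) := by
      have hnn : (0:ℤ) ≤ q.num := by exact_mod_cast Rat.num_nonneg.mpr hqpos.le
      have hnum : (q.num.toNat : ℤ) = q.num := Int.toNat_of_nonneg hnn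
      exact_mod_cast congrArg (Int.cast : ℤ → ℝ) hnum
    have hqcast : (q:ℝ) * (d:ℝ) = (p:ℝ) := by
      rw [hpq, Rat.cast_def]
      field_simp
      rfl
    have hzd : z ^ d = u ^ p := by
      rw [← Real.rpow_natCast z d, hzdef, ← Real.rpow_mul hu0.le, hqcast,
        Real.rpow_natCast]
    have hfz : f z ^ d = c ^ p := by
      rw [← step_pow z hz1 d, hzd, step_pow u hu1.le p]
    have hfz0 : 0 < f z := hpos z hz1
    have hd0' : ((d:ℝ)) ≠ 0 := ne_of_gt hd0
    have root : ∀ w : ℝ, 0 < w → w = (w ^ d) ^ ((d:ℝ))⁻¹ := by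
      intro w hw
      rw [← Real.rpow_natCast w d, ← Real.rpow_mul hw.le, mul_inv_cancel₀ hd0',
        Real.rpow_one]
    have hq_eq : (q:ℝ) = (p:ℝ) * ((d:ℝ))⁻¹ := by
      field_simp
      linarith [hqcast]
    have h1 : f z = ((f z) ^ d) ^ ((d:ℝ))⁻¹ := root _ hfz0
    rw [h1, hfz, ← Real.rpow_natCast c p, ← Real.rpow_mul hc0.le, ← hq_eq]
  have cont_c : ∀ x : ℝ, Tendsto (fun y : ℝ => c ^ y) (nhds x) (nhds (c ^ x)) := by
    intro x
    have : (fun y : ℝ => c ^ y) = fun y => Real.exp (Real.log c * y) := by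
      funext y
      rw [Real.rpow_def_of_pos hc0]
    rw [this, Real.rpow_def_of_pos hc0]
    exact (Real.continuous_exp.comp (continuous_const.mul continuous_id)).tendsto x
  have step_real : ∀ x : ℝ, 0 ≤ x → f (u ^ x) = c ^ x := by
    intro x hx
    rcases eq_or_lt_of_le hx with hx0 | hx0
    · rw [← hx0, Real.rpow_zero, Real.rpow_zero, f1]
    have happrox_lo : ∀ n : ℕ, ∃ q : ℚ, max (x - 1 / (n + 1)) (x / 2) < (q:ℝ) ∧ (q:ℝ) < x := by
      intro n
      apply exists_rat_btwn
      apply max_lt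
      · have : (0:ℝ) < 1 / (n+1) := by positivity
        linarith
      · linarith
    choose qlo hqlo1 hqlo2 using happrox_lo
    have hqlo_pos : ∀ n, (0:ℝ) ≤ (qlo n : ℝ) := by
      intro n
      have := hqlo1 n
      have h2 : x / 2 ≤ max (x - 1 / (n + 1)) (x / 2) := le_max_right _ _
      linarith
    have hqlo_tendsto : Tendsto (fun n : ℕ => ((qlo n : ℝ))) atTop (nhds x) := by
      apply tendsto_of_tendsto_of_tendsto_of_le_of_le (g := fun n : ℕ => x - 1 / (n+1))
        (h := fun _ : ℕ => x)
      · have : Tendsto (fun n : ℕ => 1 / ((n:ℝ)+1)) atTop (nhds 0) :=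
          tendsto_one_div_add_atTop_nhds_zero_nat
        simpa using (tendsto_const_nhds (x := x)).sub this
      · exact tendsto_const_nhds
      · intro n
        have h1 := hqlo1 n
        have h2 : x - 1 / (n + 1) ≤ max (x - 1 / (n + 1)) (x / 2) := le_max_left _ _
        linarith
      · exact fun n => (hqlo2 n).le
    have hle : f (u ^ x) ≤ c ^ x := by
      apply ge_of_tendsto ((cont_c x).comp hqlo_tendsto)
      apply Eventually.of_forall
      intro n
      have h1 : u ^ ((qlo n : ℝ)) ≤ u ^ x := by
        rw [Real.rpow_le_rpow_left_iff hu1]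
        exact (hqlo2 n).le
      have h2 : (1:ℝ) ≤ u ^ ((qlo n : ℝ)) := one_le_rpow' _ (hqlo_pos n)
      calc f (u ^ x) ≤ f (u ^ ((qlo n : ℝ))) := hanti _ _ h2 h1
        _ = c ^ ((qlo n : ℝ)) := step_rat _ (hqlo_pos n)
    have happrox_hi : ∀ n : ℕ, ∃ q : ℚ, x < (q:ℝ) ∧ (q:ℝ) < x + 1 / (n + 1) := by
      intro n
      apply exists_rat_btwn
      have : (0:ℝ) < 1 / (n+1) := by positivity
      linarith
    choose qhi hqhi1 hqhi2 using happrox_hi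
    have hqhi_pos : ∀ n, (0:ℝ) ≤ (qhi n : ℝ) := fun n => le_of_lt (lt_trans hx0 (hqhi1 n))
    have hqhi_tendsto : Tendsto (fun n : ℕ => ((qhi n : ℝ))) atTop (nhds x) := by
      apply tendsto_of_tendsto_of_tendsto_of_le_of_le (g := fun _ : ℕ => x)
        (h := fun n : ℕ => x + 1 / (n+1))
      · exact tendsto_const_nhds
      · have : Tendsto (fun n : ℕ => 1 / ((n:ℝ)+1)) atTop (nhds 0) :=
          tendsto_one_div_add_atTop_nhds_zero_nat
        simpa using (tendsto_const_nhds (x := x)).add this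
      · exact fun n => (hqhi1 n).le
      · exact fun n => (hqhi2 n).le
    have hge : c ^ x ≤ f (u ^ x) := by
      apply le_of_tendsto ((cont_c x).comp hqhi_tendsto)
      apply Eventually.of_forall
      intro n
      have h1 : u ^ x ≤ u ^ ((qhi n : ℝ)) := by
        rw [Real.rpow_le_rpow_left_iff hu1]
        exact (hqhi1 n).le
      have h2 : (1:ℝ) ≤ u ^ x := one_le_rpow' _ hx
      calc (c : ℝ) ^ ((qhi n : ℝ)) = f (u ^ ((qhi n : ℝ))) := (step_rat _ (hqhi_pos n)).symm
        _ ≤ f (u ^ x) := hanti _ _ h2 h1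
    exact le_antisymm hle hge
  have hlogc : Real.log c < 0 := Real.log_neg hc0 hufl
  have hlogu : 0 < Real.log u := Real.log_pos hu1
  refine ⟨-Real.log c / Real.log u, div_pos (by linarith) hlogu, ?_⟩
  intro x hx
  have hx0 : (0:ℝ) < x := lt_of_lt_of_le one_pos hx
  have he : 0 ≤ Real.log x / Real.log u := div_nonneg (Real.log_nonneg hx) hlogu.le
  have hux : u ^ (Real.log x / Real.log u) = x := by
    rw [Real.rpow_def_of_pos hu0, mul_div_assoc']
    rw [mul_comm, mul_div_assoc, div_self (ne_of_gt hlogu), mul_one, Real.exp_log hx0]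
  have hkey := step_real (Real.log x / Real.log u) he
  rw [hux] at hkey
  rw [hkey, Real.rpow_def_of_pos hc0, Real.rpow_def_of_pos hx0]
  congr 1
  field_simp

lemma frontier_prod_subset' {A B : Type*} [TopologicalSpace A] [TopologicalSpace B]
    (s : Set A) (t : Set B) :
    frontier (s ×ˢ t) ⊆ (frontier s ×ˢ univ) ∪ (univ ×ˢ frontier t) := by
  intro p hp
  rw [frontier, closure_prod_eq, interior_prod_eq] at hp
  obtain ⟨⟨h1, h2⟩, h3⟩ := hp
  by_cases hs : p.1 ∈ interior s
  · right
    exact ⟨mem_univ _, h2, fun hint => h3 ⟨hs, hint⟩⟩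
  · left
    exact ⟨⟨h1, hs⟩, mem_univ _⟩

lemma frontier_univ_pi_Iic {m : ℕ} (b : Fin m → ℝ) :
    frontier (Set.pi univ fun i => Iic (b i)) ⊆ ⋃ i, {y : Fin m → ℝ | y i = b i} := by
  have hcl : IsClosed (Set.pi univ fun i => Iic (b i)) :=
    isClosed_set_pi fun i _ => isClosed_Iic
  rw [hcl.frontier_eq, interior_pi_set finite_univ]
  intro y hy
  obtain ⟨hy1, hy2⟩ := hy
  simp only [Set.mem_pi, mem_univ, forall_true_left, mem_Iic] at hy1
  simp only [Set.mem_pi, mem_univ, forall_true_left, interior_Iic, mem_Iio, not_forall] at hy2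
  obtain ⟨i, hi⟩ := hy2
  exact mem_iUnion.mpr ⟨i, le_antisymm (hy1 i) (not_lt.mp hi)⟩

lemma isCountablySpanning_Ioi : IsCountablySpanning (range (Ioi : ℝ → Set ℝ)) := by
  refine ⟨fun n => Ioi (-(n:ℝ)), fun n => mem_range_self _, ?_⟩
  ext x
  simp only [mem_iUnion, mem_Ioi, mem_univ, iff_true]
  obtain ⟨n, hn⟩ := exists_nat_gt (-x)
  exact ⟨n, by linarith⟩

lemma isCountablySpanning_Iic : IsCountablySpanning (range (Iic : ℝ → Set ℝ)) := by
  refine ⟨fun n => Iic (n:ℝ), fun n => mem_range_self _, ?_⟩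
  ext x
  simp only [mem_iUnion, mem_Iic, mem_univ, iff_true]
  obtain ⟨n, hn⟩ := exists_nat_gt x
  exact ⟨n, hn.le⟩

lemma pi_generator {m : ℕ} :
    (inferInstance : MeasurableSpace (Fin m → ℝ)) =
      MeasurableSpace.generateFrom
        (Set.pi univ '' Set.pi univ fun _ : Fin m => range (Iic : ℝ → Set ℝ)) := by
  have h1 : (inferInstance : MeasurableSpace ℝ) =
      MeasurableSpace.generateFrom (range (Iic : ℝ → Set ℝ)) := by
    rw [BorelSpace.measurable_eq (α := ℝ), borel_eq_generateFrom_Iic ℝ]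
  calc (inferInstance : MeasurableSpace (Fin m → ℝ))
      = @MeasurableSpace.pi (Fin m) (fun _ => ℝ)
        (fun _ => MeasurableSpace.generateFrom (range (Iic : ℝ → Set ℝ))) := by
        unfold MeasurableSpace.pi
        exact iSup_congr fun i => congrArg (MeasurableSpace.comap fun b : Fin m → ℝ => b i) h1
    _ = _ := generateFrom_pi_eq fun _ => isCountablySpanning_Iic

lemma prod_generator {m : ℕ} :
    (inferInstance : MeasurableSpace (ℝ × (Fin m → ℝ))) =
      MeasurableSpace.generateFrom
        (image2 (· ×ˢ ·) (range (Ioi : ℝ → Set ℝ))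
          (Set.pi univ '' Set.pi univ fun _ : Fin m => range (Iic : ℝ → Set ℝ))) := by
  have h1 : (inferInstance : MeasurableSpace ℝ) =
      MeasurableSpace.generateFrom (range (Ioi : ℝ → Set ℝ)) := by
    rw [BorelSpace.measurable_eq (α := ℝ), borel_eq_generateFrom_Ioi ℝ]
  have h2 := pi_generator (m := m)
  calc (inferInstance : MeasurableSpace (ℝ × (Fin m → ℝ)))
      = @Prod.instMeasurableSpace ℝ (Fin m → ℝ)
          (MeasurableSpace.generateFrom (range (Ioi : ℝ → Set ℝ)))
          (MeasurableSpace.generateFrom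
            (Set.pi univ '' Set.pi univ fun _ : Fin m => range (Iic : ℝ → Set ℝ))) := by
        rw [← h1, ← h2]
    _ = _ := generateFrom_prod_eq isCountablySpanning_Ioi
          (IsCountablySpanning.pi fun _ => isCountablySpanning_Iic)

end Helpers

/-- The Pareto distribution on `[1,∞)` with shape `α`, given by its density
`α x^{−α−1}` on `[1,∞)`; its survival function is `x^{−α}`. -/
noncomputable def paretoLaw (α : ℝ) : Measure ℝ :=
  MeasureTheory.volume.withDensity fun x =>
    ENNReal.ofReal (Set.indicator (Set.Ici 1) (fun x => α * x ^ (-α - 1)) x)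

section Pareto

lemma paretoLaw_eq (α : ℝ) : paretoLaw α = ProbabilityTheory.paretoMeasure 1 α := by
  unfold paretoLaw ProbabilityTheory.paretoMeasure
  congr 1
  funext x
  rw [ProbabilityTheory.paretoPDF_eq]
  by_cases h : (1:ℝ) ≤ x
  · rw [Set.indicator_of_mem (by exact h : x ∈ Set.Ici 1), if_pos h]
    congr 1
    rw [Real.one_rpow, mul_one]
    congr 1
    ring
  · rw [Set.indicator_of_notMem (by exact h : x ∉ Set.Ici 1), if_neg h]

lemma paretoLaw_prob {α : ℝ} (hα : 0 < α) : IsProbabilityMeasure (paretoLaw α) := by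
  rw [paretoLaw_eq]
  exact ProbabilityTheory.isProbabilityMeasure_paretoMeasure one_pos hα

lemma paretoLaw_Iic_null {α : ℝ} {s : ℝ} (hs : s < 1) : paretoLaw α (Iic s) = 0 := by
  unfold paretoLaw
  rw [withDensity_apply _ measurableSet_Iic]
  have heq : ∫⁻ x in Iic s, ENNReal.ofReal ((Ici 1).indicator (fun x => α * x ^ (-α - 1)) x) =
      ∫⁻ _x in Iic s, 0 := by
    apply setLIntegral_congr_fun measurableSet_Iic
    intro x (hx : x ∈ Iic s)
    beta_reduce
    have hmem : x ∉ Ici (1:ℝ) := by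
      simp only [mem_Ici, not_le]
      exact lt_of_le_of_lt hx hs
    rw [Set.indicator_of_notMem hmem]
    simp
  rw [heq]
  simp

lemma paretoLaw_Ioi_of_one_le {α : ℝ} (hα : 0 < α) {s : ℝ} (hs : 1 ≤ s) :
    paretoLaw α (Ioi s) = ENNReal.ofReal (s ^ (-α)) := by
  have hs0 : 0 < s := lt_of_lt_of_le one_pos hs
  unfold paretoLaw
  rw [withDensity_apply _ measurableSet_Ioi]
  rw [setLIntegral_congr_fun measurableSet_Ioi
    (fun x (hx : s < x) =>
      congrArg ENNReal.ofReal (Set.indicator_of_mem (by simp; linarith : x ∈ Set.Ici 1) _))]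
  have hint : IntegrableOn (fun x : ℝ => α * x ^ (-α - 1)) (Ioi s) := by
    exact (integrableOn_Ioi_rpow_of_lt (by linarith) hs0).const_mul α
  rw [← MeasureTheory.ofReal_integral_eq_lintegral_ofReal hint]
  · congr 1
    rw [integral_const_mul, integral_Ioi_rpow_of_lt (by linarith) hs0]
    have h1 : -α - 1 + 1 = -α := by ring
    rw [h1]
    have hαne : α ≠ 0 := ne_of_gt hα
    field_simp
  · rw [EventuallyLE, ae_restrict_iff' measurableSet_Ioi]
    refine ae_of_all _ fun x (hx : s < x) => ?_
    have hx0 : 0 < x := lt_trans hs0 hx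
    have : (0:ℝ) ≤ x ^ (-α - 1) := Real.rpow_nonneg hx0.le _
    simp only [Pi.zero_apply]
    positivity

lemma paretoLaw_Ioi_of_lt_one {α : ℝ} (hα : 0 < α) {s : ℝ} (hs : s < 1) :
    paretoLaw α (Ioi s) = 1 := by
  haveI := paretoLaw_prob hα
  have h1 := measure_add_measure_compl (μ := paretoLaw α) (measurableSet_Ioi (a := s))
  rw [compl_Ioi, paretoLaw_Iic_null hs, add_zero, measure_univ] at h1
  exact h1

end Pareto

set_option maxHeartbeats 1000000 in
/-- if the conditional law of `(X/t, Y)` given `X ≥ t` converges weakly to a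
probability distribution `ν` on `[1,∞) × ℝ^{d-1}` whose first marginal is not the Dirac
mass at `1`, then `ν = P_α × H` for some `α > 0` and some probability distribution `H`;
in particular the two components of `ν` are independent. -/
theorem limit_is_pareto_product {m : ℕ} {Ω : Type*} [MeasurableSpace Ω]
    (P : Measure Ω) [IsProbabilityMeasure P]
    (X : Ω → ℝ) (Y : Ω → (Fin m → ℝ)) (hX : Measurable X) (hY : Measurable Y)
    (hX1 : ∀ᵐ ω ∂P, 1 ≤ X ω)
    (hXpos : ∀ x : ℝ, 0 < P {ω | x ≤ X ω})
    (ν : Measure (ℝ × (Fin m → ℝ))) [IsProbabilityMeasure ν]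
    (hν_supp : ν ((Set.Ici (1:ℝ)) ×ˢ (Set.univ : Set (Fin m → ℝ)))ᶜ = 0)
    (hν_nondeg : ν.map Prod.fst ≠ Measure.dirac 1)
    (hconv : ∀ g : BoundedContinuousFunction (ℝ × (Fin m → ℝ)) ℝ,
      Tendsto (fun t => ∫ ω, g (X ω / t, Y ω) ∂(P[|{ω | t ≤ X ω}])) atTop
        (𝓝 (∫ p, g p ∂ν))) :
    ∃ α : ℝ, 0 < α ∧ ∃ H : Measure (Fin m → ℝ), IsProbabilityMeasure H ∧
      ν = (paretoLaw α).prod H := by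
  classical
  have hPt : ∀ t : ℝ, P {ω | t ≤ X ω} ≠ 0 := fun t => (hXpos t).ne'
  have hPtop : ∀ t : ℝ, P {ω | t ≤ X ω} ≠ ⊤ := fun t => measure_ne_top _ _
  have hmXt : ∀ t : ℝ, MeasurableSet {ω | t ≤ X ω} :=
    fun t => measurableSet_le measurable_const hX
  set μ : ℝ → Measure (ℝ × (Fin m → ℝ)) :=
    fun t => Measure.map (fun ω => (X ω / t, Y ω)) (P[|{ω | t ≤ X ω}]) with hμdef
  have hmap : ∀ t : ℝ, Measurable fun ω => (X ω / t, Y ω) :=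
    fun t => (hX.div_const t).prodMk hY
  have hprob : ∀ t : ℝ, IsProbabilityMeasure (μ t) := by
    intro t
    haveI := cond_isProbabilityMeasure (μ := P) (hPt t)
    exact Measure.isProbabilityMeasure_map (hmap t).aemeasurable
  set μP : ℝ → ProbabilityMeasure (ℝ × (Fin m → ℝ)) := fun t => ⟨μ t, hprob t⟩ with hμP
  set νP : ProbabilityMeasure (ℝ × (Fin m → ℝ)) := ⟨ν, inferInstance⟩ with hνP
  have hT : Tendsto μP atTop (𝓝 νP) := by
    rw [ProbabilityMeasure.tendsto_iff_forall_integral_tendsto]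
    intro f
    exact Filter.Tendsto.congr
      (fun t => (integral_map (hmap t).aemeasurable
        f.continuous.measurable.aestronglyMeasurable).symm) (hconv f)
  have hport : ∀ E : Set (ℝ × (Fin m → ℝ)), ν (frontier E) = 0 →
      Tendsto (fun t => μP t E) atTop (𝓝 (νP E)) := by
    intro E hE
    apply ProbabilityMeasure.tendsto_measure_of_null_frontier_of_tendsto hT
    have h2 : (νP (frontier E) : ℝ≥0∞) = 0 := by
      rw [ProbabilityMeasure.ennreal_coeFn_eq_coeFn_toMeasure]
      exact hE
    exact_mod_cast h2
  -- the exact identity at finite t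
  have key : ∀ s : ℝ, 1 ≤ s → ∀ a : ℝ, 1 ≤ a → ∀ t : ℝ, 0 < t →
      ∀ B : Set (Fin m → ℝ), MeasurableSet B →
      μ (s*t) (Ioi a ×ˢ B) * μ t (Ici s ×ˢ univ) = μ t (Ioi (s*a) ×ˢ B) := by
    intro s hs a ha t ht B hB
    have hs0 : (0:ℝ) < s := lt_of_lt_of_le one_pos hs
    have hst : 0 < s * t := mul_pos hs0 ht
    rw [hμdef]
    simp only []
    rw [Measure.map_apply (hmap (s*t)) ((measurableSet_Ioi).prod hB),
        Measure.map_apply (hmap t) ((measurableSet_Ici).prod MeasurableSet.univ),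
        Measure.map_apply (hmap t) ((measurableSet_Ioi).prod hB),
        cond_apply (hmXt (s*t)), cond_apply (hmXt t), cond_apply (hmXt t)]
    have hA : {ω | s*t ≤ X ω} ∩ ((fun ω => (X ω / (s*t), Y ω)) ⁻¹' (Ioi a ×ˢ B))
        = {ω | s*t*a < X ω} ∩ (Y ⁻¹' B) := by
      ext ω
      simp only [mem_inter_iff, mem_setOf_eq, mem_preimage, Set.mem_prod, mem_Ioi]
      constructor
      · rintro ⟨h1, h2, h3⟩
        refine ⟨?_, h3⟩
        have := (lt_div_iff₀ hst).1 h2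
        nlinarith
      · rintro ⟨h1, h2⟩
        have hsta : s*t ≤ s*t*a := by nlinarith
        refine ⟨by linarith, ?_, h2⟩
        rw [lt_div_iff₀ hst]
        nlinarith
    have hMid : {ω | t ≤ X ω} ∩ ((fun ω => (X ω / t, Y ω)) ⁻¹' (Ici s ×ˢ univ))
        = {ω | s*t ≤ X ω} := by
      ext ω
      simp only [mem_inter_iff, mem_setOf_eq, mem_preimage, Set.mem_prod, mem_Ici,
        mem_univ, and_true]
      constructor
      · rintro ⟨h1, h2⟩
        have := (le_div_iff₀ ht).1 h2
        nlinarith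
      · intro h1
        have hts : t ≤ s*t := by nlinarith
        refine ⟨by linarith, ?_⟩
        rw [le_div_iff₀ ht]
        nlinarith
    have hC : {ω | t ≤ X ω} ∩ ((fun ω => (X ω / t, Y ω)) ⁻¹' (Ioi (s*a) ×ˢ B))
        = {ω | s*t*a < X ω} ∩ (Y ⁻¹' B) := by
      ext ω
      simp only [mem_inter_iff, mem_setOf_eq, mem_preimage, Set.mem_prod, mem_Ioi]
      constructor
      · rintro ⟨h1, h2, h3⟩
        refine ⟨?_, h3⟩
        have := (lt_div_iff₀ ht).1 h2
        nlinarith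
      · rintro ⟨h1, h2⟩
        have h3 : t ≤ s*t*a := by nlinarith
        refine ⟨by linarith, ?_, h2⟩
        rw [lt_div_iff₀ ht]
        nlinarith
    rw [hA, hMid, hC]
    have halg : (P {ω | s*t ≤ X ω})⁻¹ * P ({ω | s*t*a < X ω} ∩ (Y ⁻¹' B)) *
        ((P {ω | t ≤ X ω})⁻¹ * P {ω | s*t ≤ X ω}) =
        ((P {ω | s*t ≤ X ω})⁻¹ * P {ω | s*t ≤ X ω}) *
        ((P {ω | t ≤ X ω})⁻¹ * P ({ω | s*t*a < X ω} ∩ (Y ⁻¹' B))) := by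
      ring
    rw [halg, ENNReal.inv_mul_cancel (hPt (s*t)) (hPtop (s*t)), one_mul]
  -- limit of the identity, at continuity points
  have MR : ∀ B : Set (Fin m → ℝ), MeasurableSet B → ν (univ ×ˢ frontier B) = 0 →
      ∀ a : ℝ, 1 ≤ a → ν ({a} ×ˢ univ) = 0 →
      ∀ s : ℝ, 1 ≤ s → ν ({s} ×ˢ univ) = 0 → ν ({s*a} ×ˢ univ) = 0 →
      ν (Ioi a ×ˢ B) * ν (Ici s ×ˢ univ) = ν (Ioi (s*a) ×ˢ B) := by
    intro B hB hBf a ha haD s hs hsD hsaD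
    have hs0 : (0:ℝ) < s := lt_of_lt_of_le one_pos hs
    have hfr : ∀ c : ℝ, ν ({c} ×ˢ univ) = 0 → ∀ S : Set ℝ, frontier S = {c} →
        ν (frontier (S ×ˢ B)) = 0 := by
      intro c hc S hS
      have hsub : frontier (S ×ˢ B) ⊆ ({c} ×ˢ univ) ∪ (univ ×ˢ frontier B) := by
        rw [← hS]
        exact frontier_prod_subset' S B
      exact measure_mono_null hsub (measure_union_null hc hBf)
    have hfru : ∀ c : ℝ, ν ({c} ×ˢ univ) = 0 → ∀ S : Set ℝ, frontier S = {c} →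
        ν (frontier (S ×ˢ (univ : Set (Fin m → ℝ)))) = 0 := by
      intro c hc S hS
      have hsub : frontier (S ×ˢ (univ : Set (Fin m → ℝ))) ⊆
          ({c} ×ˢ univ) ∪ (univ ×ˢ frontier (univ : Set (Fin m → ℝ))) := by
        rw [← hS]
        exact frontier_prod_subset' S univ
      refine measure_mono_null hsub (measure_union_null hc ?_)
      rw [frontier_univ]
      simp
    have fr1 : ν (frontier (Ioi a ×ˢ B)) = 0 := hfr a haD _ frontier_Ioi
    have fr2 : ν (frontier (Ici s ×ˢ (univ : Set (Fin m → ℝ)))) = 0 :=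
      hfru s hsD _ frontier_Ici
    have fr3 : ν (frontier (Ioi (s*a) ×ˢ B)) = 0 := hfr (s*a) hsaD _ frontier_Ioi
    have hcomp : Tendsto (fun t : ℝ => s * t) atTop atTop :=
      Tendsto.const_mul_atTop hs0 tendsto_id
    have T1 : Tendsto (fun t => μP (s*t) (Ioi a ×ˢ B)) atTop (𝓝 (νP (Ioi a ×ˢ B))) :=
      (hport _ fr1).comp hcomp
    have T2 := hport _ fr2
    have T3 := hport _ fr3
    have evEq : (fun t => μP (s*t) (Ioi a ×ˢ B) * μP t (Ici s ×ˢ univ)) =ᶠ[atTop]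
        fun t => μP t (Ioi (s*a) ×ˢ B) := by
      filter_upwards [eventually_gt_atTop (0:ℝ)] with t ht
      have hk := key s hs a ha t ht B hB
      have h2 : ((μP (s*t) (Ioi a ×ˢ B) * μP t (Ici s ×ˢ univ) : ℝ≥0) : ℝ≥0∞) =
          ((μP t (Ioi (s*a) ×ˢ B) : ℝ≥0) : ℝ≥0∞) := by
        rw [ENNReal.coe_mul, ProbabilityMeasure.ennreal_coeFn_eq_coeFn_toMeasure,
          ProbabilityMeasure.ennreal_coeFn_eq_coeFn_toMeasure,
          ProbabilityMeasure.ennreal_coeFn_eq_coeFn_toMeasure]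
        exact hk
      exact_mod_cast h2
    have huniq : νP (Ioi a ×ˢ B) * νP (Ici s ×ˢ univ) = νP (Ioi (s*a) ×ˢ B) :=
      tendsto_nhds_unique ((T1.mul T2).congr' evEq) T3
    have h3 : ((νP (Ioi a ×ˢ B) * νP (Ici s ×ˢ univ) : ℝ≥0) : ℝ≥0∞) =
        ((νP (Ioi (s*a) ×ˢ B) : ℝ≥0) : ℝ≥0∞) := by exact_mod_cast huniq
    rw [ENNReal.coe_mul, ProbabilityMeasure.ennreal_coeFn_eq_coeFn_toMeasure,
      ProbabilityMeasure.ennreal_coeFn_eq_coeFn_toMeasure,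
      ProbabilityMeasure.ennreal_coeFn_eq_coeFn_toMeasure] at h3
    exact h3
  -- countably many vertical atoms
  have hDc : {x : ℝ | ν ({x} ×ˢ (univ : Set (Fin m → ℝ))) ≠ 0}.Countable := by
    have h := MeasureTheory.Measure.countable_meas_pos_of_disjoint_iUnion (μ := ν)
      (As := fun x : ℝ => {x} ×ˢ (univ : Set (Fin m → ℝ)))
      (fun x => (measurableSet_singleton x).prod MeasurableSet.univ) ?_
    · apply h.mono
      intro x hx
      exact pos_iff_ne_zero.mpr hx
    · intro x y hxy
      rw [Function.onFun]
      apply Set.disjoint_left.mpr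
      rintro ⟨p1, p2⟩ hp1 hp2
      rw [Set.mem_prod] at hp1 hp2
      exact hxy (by rw [← mem_singleton_iff.mp hp1.1, ← mem_singleton_iff.mp hp2.1])
  have hD2c : ∀ i : Fin m,
      {c : ℝ | ν ((univ : Set ℝ) ×ˢ {y : Fin m → ℝ | y i = c}) ≠ 0}.Countable := by
    intro i
    have h := MeasureTheory.Measure.countable_meas_pos_of_disjoint_iUnion (μ := ν)
      (As := fun c : ℝ => (univ : Set ℝ) ×ˢ {y : Fin m → ℝ | y i = c})
      (fun c => MeasurableSet.univ.prod (by
        have hpre : MeasurableSet ((fun y : Fin m → ℝ => y i) ⁻¹' {c}) :=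
          measurable_pi_apply i (measurableSet_singleton c)
        exact hpre))
      ?_
    · apply h.mono
      intro x hx
      exact pos_iff_ne_zero.mpr hx
    · intro x y hxy
      rw [Function.onFun]
      apply Set.disjoint_left.mpr
      rintro ⟨p1, p2⟩ hp1 hp2
      rw [Set.mem_prod] at hp1 hp2
      exact hxy (by rw [← hp1.2, ← hp2.2])
  -- the stability equation, for all a, s ≥ 1
  have EQ : ∀ B : Set (Fin m → ℝ), MeasurableSet B → ν (univ ×ˢ frontier B) = 0 →
      ∀ a : ℝ, 1 ≤ a → ∀ s : ℝ, 1 ≤ s →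
      ν (Ioi a ×ˢ B) * ν (Ioi s ×ˢ univ) = ν (Ioi (s*a) ×ˢ B) := by
    intro B hB hBf a ha s hs
    -- choose good approximating sequences from above
    obtain ⟨sq, hsq_gt, hsq_good, hsq_dec, hsq_lt⟩ :=
      exists_seq_anti_notMem (fun _ => {x : ℝ | ν ({x} ×ˢ (univ : Set (Fin m → ℝ))) ≠ 0})
        (fun _ => hDc) s
    have hsq_pos : ∀ n, 0 < sq n := fun n => lt_of_lt_of_le (lt_of_lt_of_le one_pos hs)
      (hsq_gt n).le
    obtain ⟨aq, haq_gt, haq_good, haq_dec, haq_lt⟩ :=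
      exists_seq_anti_notMem
        (fun n => {x : ℝ | ν ({x} ×ˢ (univ : Set (Fin m → ℝ))) ≠ 0} ∪
          ((fun x : ℝ => sq n * x) ⁻¹' {x : ℝ | ν ({x} ×ˢ (univ : Set (Fin m → ℝ))) ≠ 0}))
        (fun n => (hDc.union (hDc.preimage
          (mul_right_injective₀ (ne_of_gt (hsq_pos n)))))) a
    have haqD : ∀ n, ν ({aq n} ×ˢ (univ : Set (Fin m → ℝ))) = 0 := by
      intro n
      have := haq_good n
      rw [Set.mem_union, not_or] at this
      exact not_not.mp fun hne => this.1 hne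
    have hsqaqD : ∀ n, ν ({sq n * aq n} ×ˢ (univ : Set (Fin m → ℝ))) = 0 := by
      intro n
      have := haq_good n
      rw [Set.mem_union, not_or] at this
      have h2 := this.2
      rw [Set.mem_preimage] at h2
      exact not_not.mp fun hne => h2 hne
    have hsqD : ∀ n, ν ({sq n} ×ˢ (univ : Set (Fin m → ℝ))) = 0 :=
      fun n => not_not.mp fun hne => (hsq_good n) hne
    -- per-n equation with Ioi in the middle
    have hpern : ∀ n, ν (Ioi (aq n) ×ˢ B) * ν (Ioi (sq n) ×ˢ univ)
        = ν (Ioi (sq n * aq n) ×ˢ B) := by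
      intro n
      have hIciIoi : ν (Ici (sq n) ×ˢ (univ : Set (Fin m → ℝ)))
          = ν (Ioi (sq n) ×ˢ (univ : Set (Fin m → ℝ))) := by
        apply le_antisymm
        · have hsub : Ici (sq n) ×ˢ (univ : Set (Fin m → ℝ)) ⊆
              ({sq n} ×ˢ univ) ∪ (Ioi (sq n) ×ˢ univ) := by
            rintro ⟨p1, p2⟩ ⟨hp1, hp2⟩
            rcases eq_or_lt_of_le (mem_Ici.mp hp1) with h | h
            · exact Or.inl ⟨h.symm, hp2⟩
            · exact Or.inr ⟨h, hp2⟩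
          calc ν (Ici (sq n) ×ˢ (univ : Set (Fin m → ℝ)))
              ≤ ν (({sq n} ×ˢ univ) ∪ (Ioi (sq n) ×ˢ univ)) := measure_mono hsub
            _ ≤ ν ({sq n} ×ˢ (univ : Set (Fin m → ℝ))) + ν (Ioi (sq n) ×ˢ univ) :=
                measure_union_le _ _
            _ = ν (Ioi (sq n) ×ˢ univ) := by rw [hsqD n, zero_add]
        · exact measure_mono (prod_mono_left Ioi_subset_Ici_self)
      rw [← hIciIoi]
      exact MR B hB hBf (aq n) (le_trans ha (haq_gt n).le) (haqD n) (sq n)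
        (le_trans hs (hsq_gt n).le) (hsqD n) (hsqaqD n)
    -- three монotone limits
    have haq_anti : ∀ k l : ℕ, k ≤ l → aq l ≤ aq k := by
      intro k l hkl
      induction l with
      | zero => rw [Nat.le_zero.mp hkl]
      | succ l ih =>
          rcases Nat.lt_or_ge k (l+1) with h | h
          · exact le_trans (haq_dec l).le (ih (Nat.lt_succ_iff.mp h))
          · rw [Nat.le_antisymm hkl h]
    have hsq_anti : ∀ k l : ℕ, k ≤ l → sq l ≤ sq k := by
      intro k l hkl
      induction l with
      | zero => rw [Nat.le_zero.mp hkl]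
      | succ l ih =>
          rcases Nat.lt_or_ge k (l+1) with h | h
          · exact le_trans (hsq_dec l).le (ih (Nat.lt_succ_iff.mp h))
          · rw [Nat.le_antisymm hkl h]
    have hUnion : ∀ (c : ℝ) (cq : ℕ → ℝ), (∀ n, c < cq n) → (∀ n, cq n < c + 1/(n+1)) →
        (⋃ n, Ioi (cq n)) = Ioi c := by
      intro c cq h1 h2
      ext x
      simp only [mem_iUnion, mem_Ioi]
      constructor
      · rintro ⟨n, hn⟩
        exact lt_trans (h1 n) hn
      · intro hx
        obtain ⟨n, hn⟩ := exists_nat_one_div_lt (show 0 < x - c by linarith)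
        exact ⟨n, by have := h2 n; linarith⟩
    have TA : Tendsto (fun n => ν (Ioi (aq n) ×ˢ B)) atTop (𝓝 (ν (Ioi a ×ˢ B))) := by
      have hmono : Monotone fun n => Ioi (aq n) ×ˢ B := by
        intro k l hkl
        exact Set.prod_mono_left (Ioi_subset_Ioi (haq_anti k l hkl))
      have := tendsto_measure_iUnion_atTop (μ := ν) hmono
      rw [← iUnion_prod_const, hUnion a aq haq_gt haq_lt] at this
      exact this
    have TS : Tendsto (fun n => ν (Ioi (sq n) ×ˢ (univ : Set (Fin m → ℝ)))) atTop
        (𝓝 (ν (Ioi s ×ˢ univ))) := by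
      have hmono : Monotone fun n => Ioi (sq n) ×ˢ (univ : Set (Fin m → ℝ)) := by
        intro k l hkl
        exact Set.prod_mono_left (Ioi_subset_Ioi (hsq_anti k l hkl))
      have := tendsto_measure_iUnion_atTop (μ := ν) hmono
      rw [← iUnion_prod_const, hUnion s sq hsq_gt hsq_lt] at this
      exact this
    have TSA : Tendsto (fun n => ν (Ioi (sq n * aq n) ×ˢ B)) atTop
        (𝓝 (ν (Ioi (s*a) ×ˢ B))) := by
      have hmono : Monotone fun n => Ioi (sq n * aq n) ×ˢ B := by
        intro k l hkl
        apply Set.prod_mono_left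
        apply Ioi_subset_Ioi
        have h1 := haq_anti k l hkl
        have h2 := hsq_anti k l hkl
        have h3 := haq_gt l
        have h4 := hsq_pos l
        nlinarith [lt_of_lt_of_le one_pos (le_trans ha (haq_gt l).le)]
      have := tendsto_measure_iUnion_atTop (μ := ν) hmono
      have hU : (⋃ n, Ioi (sq n * aq n)) = Ioi (s*a) := by
        ext x
        simp only [mem_iUnion, mem_Ioi]
        have ha0 : (0:ℝ) < a := lt_of_lt_of_le one_pos ha
        have hs0 : (0:ℝ) < s := lt_of_lt_of_le one_pos hs
        constructor
        · rintro ⟨n, hn⟩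
          have h1 := haq_gt n
          have h2 := hsq_gt n
          nlinarith
        · intro hx
          have hd : (0:ℝ) < s + a + 1 := by linarith
          obtain ⟨n, hn⟩ := exists_nat_one_div_lt
            (show 0 < (x - s*a)/(s + a + 1) from div_pos (by linarith) hd)
          refine ⟨n, ?_⟩
          have h1 := haq_lt n
          have h2 := hsq_lt n
          have h3 := haq_gt n
          have h4 := hsq_gt n
          have h5 : (0:ℝ) < 1/((n:ℝ)+1) := by positivity
          have h6 : (1:ℝ)/((n:ℝ)+1) ≤ 1 := by
            rw [div_le_one (by positivity)]
            simp
          have hm : 1/((n:ℝ)+1) * (s + a + 1) < x - s*a := (lt_div_iff₀ hd).mp hn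
          have hprod : sq n * aq n < (s + 1/((n:ℝ)+1)) * (a + 1/((n:ℝ)+1)) :=
            mul_lt_mul'' h2 h1 (by linarith) (by linarith)
          have he2 : (1/((n:ℝ)+1)) * (1/((n:ℝ)+1)) ≤ 1/((n:ℝ)+1) := by nlinarith
          nlinarith [hm, hprod, he2]
      rw [← iUnion_prod_const, hU] at this
      exact this
    have Tmul := ENNReal.Tendsto.mul TA (Or.inr (measure_ne_top ν _)) TS
      (Or.inr (measure_ne_top ν _))
    exact tendsto_nhds_unique (Tmul.congr hpern) TSA
  -- support facts
  have hIci1 : ν (Ici (1:ℝ) ×ˢ (univ : Set (Fin m → ℝ))) = 1 := by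
    have h := measure_add_measure_compl (μ := ν)
      (s := (Ici (1:ℝ)) ×ˢ (univ : Set (Fin m → ℝ)))
      (measurableSet_Ici.prod MeasurableSet.univ)
    rw [hν_supp, add_zero, measure_univ] at h
    exact h
  have EQu : ∀ a : ℝ, 1 ≤ a → ∀ s : ℝ, 1 ≤ s →
      ν (Ioi a ×ˢ (univ : Set (Fin m → ℝ))) * ν (Ioi s ×ˢ univ) = ν (Ioi (s*a) ×ˢ univ) :=
    fun a ha s hs => EQ univ MeasurableSet.univ (by rw [frontier_univ]; simp) a ha s hs
  have hG1 : ν (Ioi (1:ℝ) ×ˢ (univ : Set (Fin m → ℝ))) = 1 := by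
    have h := EQu 1 le_rfl 1 le_rfl
    rw [one_mul (1:ℝ)] at h
    rcases eq_or_ne (ν (Ioi (1:ℝ) ×ˢ (univ : Set (Fin m → ℝ)))) 0 with h0 | hne
    · exfalso
      apply hν_nondeg
      have hatom : ν ({(1:ℝ)} ×ˢ (univ : Set (Fin m → ℝ))) = 1 := by
        have hsub : (Ici (1:ℝ)) ×ˢ (univ : Set (Fin m → ℝ)) ⊆
            ({(1:ℝ)} ×ˢ univ) ∪ (Ioi 1 ×ˢ univ) := by
          rintro ⟨p1, p2⟩ ⟨hp1, hp2⟩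
          rcases eq_or_lt_of_le (mem_Ici.mp hp1) with hh | hh
          · exact Or.inl ⟨hh.symm, hp2⟩
          · exact Or.inr ⟨hh, hp2⟩
        have hle : (1:ℝ≥0∞) ≤ ν ({(1:ℝ)} ×ˢ univ) + ν (Ioi 1 ×ˢ univ) := by
          calc (1:ℝ≥0∞) = ν (Ici (1:ℝ) ×ˢ (univ : Set (Fin m → ℝ))) := hIci1.symm
            _ ≤ ν (({(1:ℝ)} ×ˢ univ) ∪ (Ioi 1 ×ˢ univ)) := measure_mono hsub
            _ ≤ _ := measure_union_le _ _
        rw [h0, add_zero] at hle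
        exact le_antisymm prob_le_one hle
      apply Measure.ext
      intro E hE
      rw [Measure.map_apply measurable_fst hE, Measure.dirac_apply' _ hE]
      by_cases h1 : (1:ℝ) ∈ E
      · rw [Set.indicator_of_mem h1]
        have hsub : ({(1:ℝ)} ×ˢ (univ : Set (Fin m → ℝ))) ⊆ Prod.fst ⁻¹' E := by
          rintro ⟨p1, p2⟩ ⟨hp1, _⟩
          have hp1' : p1 = 1 := hp1
          have hmem : p1 ∈ E := by rw [hp1']; exact h1
          exact hmem
        have hge := measure_mono (μ := ν) hsub
        rw [hatom] at hge
        exact le_antisymm prob_le_one hge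
      · rw [Set.indicator_of_notMem h1]
        have hcompl : ν (({(1:ℝ)} ×ˢ (univ : Set (Fin m → ℝ)))ᶜ) = 0 := by
          have h2 := measure_add_measure_compl (μ := ν)
            ((measurableSet_singleton (1:ℝ)).prod MeasurableSet.univ)
          rw [hatom, measure_univ] at h2
          have h3 : (1:ℝ≥0∞) + ν (({(1:ℝ)} ×ˢ (univ : Set (Fin m → ℝ)))ᶜ) = 1 + 0 := by
            rw [add_zero]; exact h2
          exact (ENNReal.add_right_inj ENNReal.one_ne_top).mp h3
        refine measure_mono_null ?_ hcompl
        rintro ⟨p1, p2⟩ hp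
        rw [mem_preimage] at hp
        have hp' : p1 ∈ E := hp
        intro hmem
        have h5 : p1 = 1 := hmem.1
        exact h1 (h5 ▸ hp')
    · have hfin : ν (Ioi (1:ℝ) ×ˢ (univ : Set (Fin m → ℝ))) ≠ ⊤ := measure_ne_top _ _
      have h4 := congrArg (· * (ν (Ioi (1:ℝ) ×ˢ (univ : Set (Fin m → ℝ))))⁻¹) h
      rwa [mul_assoc, ENNReal.mul_inv_cancel hne hfin, mul_one] at h4
  -- no atom on the line x = 1
  have hatom1 : ν ({(1:ℝ)} ×ˢ (univ : Set (Fin m → ℝ))) = 0 := by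
    have hunion : ({(1:ℝ)} ×ˢ (univ : Set (Fin m → ℝ))) ∪ (Ioi 1 ×ˢ univ)
        = Ici (1:ℝ) ×ˢ (univ : Set (Fin m → ℝ)) := by
      rw [← Set.union_prod]
      congr 1
      rw [← Set.insert_eq, Ioi_insert]
    have hdisj : Disjoint ({(1:ℝ)} ×ˢ (univ : Set (Fin m → ℝ))) (Ioi 1 ×ˢ univ) := by
      apply Set.disjoint_left.mpr
      rintro ⟨p1, p2⟩ ⟨hp1, _⟩ ⟨hq1, _⟩
      rw [mem_singleton_iff] at hp1
      rw [hp1] at hq1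
      exact lt_irrefl _ (mem_Ioi.mp hq1)
    have h2 := measure_union (μ := ν) hdisj (measurableSet_Ioi.prod MeasurableSet.univ)
    rw [hunion, hIci1, hG1] at h2
    have h3 : ν ({(1:ℝ)} ×ˢ (univ : Set (Fin m → ℝ))) + 1 = 0 + 1 := by
      rw [zero_add]; exact h2.symm
    rwa [ENNReal.add_left_inj ENNReal.one_ne_top] at h3
  -- the second marginal
  set H : Measure (Fin m → ℝ) := ν.map Prod.snd with hHdef
  have hHprob : IsProbabilityMeasure H := Measure.isProbabilityMeasure_map measurable_snd.aemeasurable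
  have hHval : ∀ B : Set (Fin m → ℝ), MeasurableSet B → H B = ν (univ ×ˢ B) := by
    intro B hB
    rw [hHdef, Measure.map_apply measurable_snd hB]
    congr 1
    ext ⟨p1, p2⟩
    simp [Set.mem_prod]
  have hlow : ∀ a : ℝ, a < 1 → ∀ B : Set (Fin m → ℝ), MeasurableSet B →
      ν (Ioi a ×ˢ B) = ν (univ ×ˢ B) := by
    intro a ha B hB
    apply le_antisymm (measure_mono (Set.prod_mono_left (subset_univ _)))
    have hsub : (univ : Set ℝ) ×ˢ B ⊆ (Ioi a ×ˢ B) ∪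
        ((Ici (1:ℝ) ×ˢ (univ : Set (Fin m → ℝ)))ᶜ) := by
      rintro ⟨p1, p2⟩ ⟨_, hp2⟩
      by_cases h : 1 ≤ p1
      · exact Or.inl ⟨lt_of_lt_of_le ha h, hp2⟩
      · exact Or.inr fun hmem => h hmem.1
    calc ν ((univ : Set ℝ) ×ˢ B)
        ≤ ν ((Ioi a ×ˢ B) ∪ ((Ici (1:ℝ) ×ˢ (univ : Set (Fin m → ℝ)))ᶜ)) := measure_mono hsub
      _ ≤ ν (Ioi a ×ˢ B) + ν ((Ici (1:ℝ) ×ˢ (univ : Set (Fin m → ℝ)))ᶜ) := measure_union_le _ _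
      _ = ν (Ioi a ×ˢ B) := by rw [hν_supp, add_zero]
  have hIoi1B : ∀ B : Set (Fin m → ℝ), MeasurableSet B →
      ν (Ioi (1:ℝ) ×ˢ B) = H B := by
    intro B hB
    rw [hHval B hB]
    apply le_antisymm (measure_mono (Set.prod_mono_left (subset_univ _)))
    have hsub : (univ : Set ℝ) ×ˢ B ⊆ ((Ioi 1 ×ˢ B) ∪ ({(1:ℝ)} ×ˢ (univ : Set (Fin m → ℝ))))
        ∪ ((Ici (1:ℝ) ×ˢ (univ : Set (Fin m → ℝ)))ᶜ) := by
      rintro ⟨p1, p2⟩ ⟨_, hp2⟩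
      rcases lt_trichotomy p1 1 with h | h | h
      · exact Or.inr fun hmem => absurd hmem.1 (not_le.mpr h)
      · exact Or.inl (Or.inr ⟨h, mem_univ _⟩)
      · exact Or.inl (Or.inl ⟨h, hp2⟩)
    calc ν ((univ : Set ℝ) ×ˢ B) ≤ _ := measure_mono hsub
      _ ≤ ν ((Ioi 1 ×ˢ B) ∪ ({(1:ℝ)} ×ˢ (univ : Set (Fin m → ℝ))))
          + ν ((Ici (1:ℝ) ×ˢ (univ : Set (Fin m → ℝ)))ᶜ) := measure_union_le _ _
      _ ≤ (ν (Ioi 1 ×ˢ B) + ν ({(1:ℝ)} ×ˢ (univ : Set (Fin m → ℝ))))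
          + ν ((Ici (1:ℝ) ×ˢ (univ : Set (Fin m → ℝ)))ᶜ) :=
          add_le_add (measure_union_le _ _) le_rfl
      _ = ν (Ioi 1 ×ˢ B) := by rw [hatom1, hν_supp, add_zero, add_zero]
  -- positivity of the survival function of the first marginal
  have hGpos : ∀ s : ℝ, 1 ≤ s → ν (Ioi s ×ˢ (univ : Set (Fin m → ℝ))) ≠ 0 := by
    by_contra hcon
    push_neg at hcon
    obtain ⟨u₀, hu₀1, hu₀⟩ := hcon
    have hu₀0 : (0:ℝ) < u₀ := lt_of_lt_of_le one_pos hu₀1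
    have hseq : ∀ n : ℕ, ν (Ioi (u₀ ^ ((1:ℝ)/2^n)) ×ˢ (univ : Set (Fin m → ℝ))) = 0 := by
      intro n
      induction n with
      | zero => simpa using hu₀
      | succ n ih =>
          have hv1 : 1 ≤ u₀ ^ ((1:ℝ)/2^(n+1)) := Real.one_le_rpow hu₀1 (by positivity)
          have hvv : u₀ ^ ((1:ℝ)/2^(n+1)) * u₀ ^ ((1:ℝ)/2^(n+1)) = u₀ ^ ((1:ℝ)/2^n) := by
            rw [← Real.rpow_add hu₀0]
            congr 1
            rw [pow_succ]
            have h2 : (0:ℝ) < 2^n := by positivity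
            field_simp
            ring
          have heq := EQu _ hv1 _ hv1
          rw [hvv, ih] at heq
          exact mul_self_eq_zero.mp heq
    have hzero : ∀ s : ℝ, 1 < s → ν (Ioi s ×ˢ (univ : Set (Fin m → ℝ))) = 0 := by
      intro s hs1
      have hlogs : 0 < Real.log s := Real.log_pos hs1
      obtain ⟨n, hn⟩ := exists_nat_gt (Real.log u₀ / Real.log s)
      have h2n : (n:ℝ) < 2^n := by exact_mod_cast (Nat.lt_two_pow_self (n := n))
      have hle : u₀ ^ ((1:ℝ)/2^n) ≤ s := by
        have hp : (0:ℝ) < 2^n := by positivity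
        have hlogu₀ : 0 ≤ Real.log u₀ := Real.log_nonneg hu₀1
        rw [Real.rpow_def_of_pos hu₀0, ← Real.exp_log (lt_trans one_pos hs1)]
        apply Real.exp_le_exp.mpr
        rw [mul_one_div, div_le_iff₀ hp]
        nlinarith [(div_lt_iff₀ hlogs).mp hn]
      exact measure_mono_null (Set.prod_mono_left (Ioi_subset_Ioi hle)) (hseq n)
    have hfin : ν (Ioi (1:ℝ) ×ˢ (univ : Set (Fin m → ℝ))) = 0 := by
      have hU : (Ioi (1:ℝ)) = ⋃ n : ℕ, Ioi (1 + 1/((n:ℝ)+1)) := by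
        ext x
        simp only [mem_Ioi, mem_iUnion]
        constructor
        · intro hx
          obtain ⟨n, hn⟩ := exists_nat_one_div_lt (show 0 < x - 1 by linarith)
          exact ⟨n, by linarith⟩
        · rintro ⟨n, hn⟩
          have : (0:ℝ) < 1/((n:ℝ)+1) := by positivity
          linarith
      rw [hU, iUnion_prod_const]
      apply measure_iUnion_null
      intro n
      apply hzero
      have : (0:ℝ) < 1/((n:ℝ)+1) := by positivity
      linarith
    rw [hG1] at hfin
    exact one_ne_zero hfin
  -- nondegeneracy: some value < 1
  have hsmall : ∃ n : ℕ, ν (Ioi ((n:ℝ)) ×ˢ (univ : Set (Fin m → ℝ))) < 1 := by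
    have hinter : (⋂ n : ℕ, (Ioi ((n:ℝ)) ×ˢ (univ : Set (Fin m → ℝ)))) = ∅ := by
      ext ⟨p1, p2⟩
      simp only [mem_iInter, Set.mem_prod, mem_Ioi, mem_univ, and_true,
        mem_empty_iff_false, iff_false, not_forall]
      obtain ⟨n, hn⟩ := exists_nat_gt p1
      exact ⟨n, not_lt.mpr hn.le⟩
    have hanti : Antitone fun n : ℕ => (Ioi ((n:ℝ)) ×ˢ (univ : Set (Fin m → ℝ))) := by
      intro k l hkl
      exact Set.prod_mono_left (Ioi_subset_Ioi (by exact_mod_cast hkl))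
    have hTI := tendsto_measure_iInter_atTop (μ := ν)
      (s := fun n : ℕ => (Ioi ((n:ℝ)) ×ˢ (univ : Set (Fin m → ℝ))))
      (fun n => ((measurableSet_Ioi).prod MeasurableSet.univ).nullMeasurableSet) hanti
      ⟨0, measure_ne_top _ _⟩
    rw [hinter] at hTI
    simp only [measure_empty] at hTI
    have hev := hTI.eventually_lt_const (by norm_num : (0:ℝ≥0∞) < 1)
    obtain ⟨n, hn⟩ := hev.exists
    exact ⟨n, hn⟩
  -- identify the survival function
  set Gf : ℝ → ℝ := fun s => (ν (Ioi s ×ˢ (univ : Set (Fin m → ℝ)))).toReal with hGf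
  obtain ⟨n₀, hn₀⟩ := hsmall
  have hmono' : ∀ x y : ℝ, x ≤ y →
      ν (Ioi y ×ˢ (univ : Set (Fin m → ℝ))) ≤ ν (Ioi x ×ˢ univ) :=
    fun x y h => measure_mono (Set.prod_mono_left (Ioi_subset_Ioi h))
  have hu1 : (1:ℝ) < (n₀:ℝ) + 2 := by
    have : (0:ℝ) ≤ (n₀:ℝ) := Nat.cast_nonneg _
    linarith
  have f1 : Gf 1 = 1 := by
    rw [hGf]
    simp only []
    rw [hG1]
    simp
  have fmult : ∀ x, 1 ≤ x → ∀ y, 1 ≤ y → Gf (x*y) = Gf x * Gf y := by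
    intro x hx y hy
    rw [hGf]
    simp only []
    rw [← EQu y hy x hx, ENNReal.toReal_mul, mul_comm]
  have fanti : ∀ x y, 1 ≤ x → x ≤ y → Gf y ≤ Gf x := by
    intro x y _ hxy
    exact ENNReal.toReal_mono (measure_ne_top _ _) (hmono' x y hxy)
  have fpos : ∀ x, 1 ≤ x → 0 < Gf x := by
    intro x hx
    exact ENNReal.toReal_pos (hGpos x hx) (measure_ne_top _ _)
  have hufl : Gf ((n₀:ℝ)+2) < 1 := by
    have hle : ν (Ioi ((n₀:ℝ)+2) ×ˢ (univ : Set (Fin m → ℝ))) ≤ ν (Ioi ((n₀:ℝ)) ×ˢ univ) :=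
      hmono' _ _ (by linarith)
    have hlt := lt_of_le_of_lt hle hn₀
    have h2 := (ENNReal.toReal_lt_toReal (measure_ne_top _ _) ENNReal.one_ne_top).mpr hlt
    simpa using h2
  obtain ⟨α, hα, hGval⟩ := mult_antitone_eq_rpow Gf f1 fmult fanti fpos hu1 hufl
  have hGν : ∀ s : ℝ, 1 ≤ s →
      ν (Ioi s ×ˢ (univ : Set (Fin m → ℝ))) = ENNReal.ofReal (s ^ (-α)) := by
    intro s hs
    have hh := hGval s hs
    rw [hGf] at hh
    simp only [] at hh
    rw [← hh, ENNReal.ofReal_toReal (measure_ne_top _ _)]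
  -- master formula for boxes with good second coordinates
  have master_good : ∀ a : ℝ, ∀ b : Fin m → ℝ,
      (∀ i, ν ((univ : Set ℝ) ×ˢ {y : Fin m → ℝ | y i = b i}) = 0) →
      ν (Ioi a ×ˢ (Set.pi univ fun i => Iic (b i)))
        = paretoLaw α (Ioi a) * H (Set.pi univ fun i => Iic (b i)) := by
    intro a b hgood
    have hQm : MeasurableSet (Set.pi univ fun i => Iic (b i)) :=
      MeasurableSet.univ_pi fun i => measurableSet_Iic
    have hQf : ν (univ ×ˢ frontier (Set.pi univ fun i => Iic (b i))) = 0 := by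
      apply measure_mono_null (Set.prod_mono_right (frontier_univ_pi_Iic b))
      rw [Set.prod_iUnion]
      exact measure_iUnion_null fun i => hgood i
    rcases lt_or_ge a 1 with ha | ha
    · rw [hlow a ha _ hQm, paretoLaw_Ioi_of_lt_one hα ha, one_mul, hHval _ hQm]
    · have heq := EQ _ hQm hQf 1 le_rfl a ha
      rw [mul_one] at heq
      rw [← heq, hIoi1B _ hQm, hGν a ha, paretoLaw_Ioi_of_one_le hα ha, mul_comm]
  haveI hPP : IsProbabilityMeasure (paretoLaw α) := paretoLaw_prob hα
  -- master formula for all boxes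
  have master : ∀ a : ℝ, ∀ b : Fin m → ℝ,
      ν (Ioi a ×ˢ (Set.pi univ fun i => Iic (b i)))
        = paretoLaw α (Ioi a) * H (Set.pi univ fun i => Iic (b i)) := by
    intro a b
    have hch : ∀ i : Fin m, ∃ u : ℕ → ℝ, (∀ n, b i < u n) ∧
        (∀ n, u n ∉ {c : ℝ | ν ((univ : Set ℝ) ×ˢ {y : Fin m → ℝ | y i = c}) ≠ 0}) ∧
        (∀ n, u (n+1) < u n) ∧ (∀ n, u n < b i + 1/(n+1)) :=
      fun i => exists_seq_anti_notMem _ (fun _ => hD2c i) (b i)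
    choose c hc1 hc2 hc3 hc4 using hch
    have hcanti : ∀ i, ∀ k l : ℕ, k ≤ l → c i l ≤ c i k := by
      intro i k l hkl
      induction l with
      | zero => rw [Nat.le_zero.mp hkl]
      | succ l ih =>
          rcases Nat.lt_or_ge k (l+1) with h | h
          · exact le_trans (hc3 i l).le (ih (Nat.lt_succ_iff.mp h))
          · rw [Nat.le_antisymm hkl h]
    have hQanti : Antitone fun n => Set.pi univ fun i => Iic (c i n) := by
      intro k l hkl y hy i hiu
      exact le_trans (hy i hiu) (hcanti i k l hkl)
    have hQint : (⋂ n, Set.pi univ fun i => Iic (c i n)) = Set.pi univ fun i => Iic (b i) := by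
      ext y
      simp only [mem_iInter, Set.mem_pi, mem_univ, forall_true_left, mem_Iic]
      constructor
      · intro h i
        by_contra hgt
        push_neg at hgt
        obtain ⟨n, hn⟩ := exists_nat_one_div_lt (show 0 < y i - b i by linarith)
        have h1 := h n i
        have h2 := hc4 i n
        linarith
      · intro h n i
        exact le_trans (h i) (hc1 i n).le
    have hTν : Tendsto (fun n => ν (Ioi a ×ˢ (Set.pi univ fun i => Iic (c i n)))) atTop
        (𝓝 (ν (Ioi a ×ˢ (Set.pi univ fun i => Iic (b i))))) := by
      have hanti2 : Antitone fun n => Ioi a ×ˢ (Set.pi univ fun i => Iic (c i n)) :=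
        fun k l hkl => Set.prod_mono_right (hQanti hkl)
      have hTI := tendsto_measure_iInter_atTop (μ := ν)
        (s := fun n => Ioi a ×ˢ (Set.pi univ fun i => Iic (c i n)))
        (fun n => (measurableSet_Ioi.prod
          (MeasurableSet.univ_pi fun i => measurableSet_Iic)).nullMeasurableSet)
        hanti2 ⟨0, measure_ne_top _ _⟩
      rw [← Set.prod_iInter, hQint] at hTI
      exact hTI
    have hTH : Tendsto (fun n => H (Set.pi univ fun i => Iic (c i n))) atTop
        (𝓝 (H (Set.pi univ fun i => Iic (b i)))) := by
      have hTI := tendsto_measure_iInter_atTop (μ := H)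
        (s := fun n => Set.pi univ fun i => Iic (c i n))
        (fun n => (MeasurableSet.univ_pi fun i => measurableSet_Iic).nullMeasurableSet)
        hQanti ⟨0, measure_ne_top _ _⟩
      rw [hQint] at hTI
      exact hTI
    have hTHc := ENNReal.Tendsto.const_mul (a := paretoLaw α (Ioi a)) hTH
      (Or.inr (measure_ne_top _ _))
    have hseq_eq : ∀ n : ℕ, ν (Ioi a ×ˢ (Set.pi univ fun i => Iic (c i n)))
        = paretoLaw α (Ioi a) * H (Set.pi univ fun i => Iic (c i n)) := by
      intro n
      apply master_good
      intro i
      exact not_not.mp fun hne => (hc2 i n) hne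
    exact tendsto_nhds_unique (hTν.congr hseq_eq) hTHc
  -- conclusion
  refine ⟨α, hα, H, hHprob, ?_⟩
  apply MeasureTheory.ext_of_generate_finite _ prod_generator
    (IsPiSystem.prod isPiSystem_Ioi (IsPiSystem.pi fun _ => isPiSystem_Iic))
  · intro E hE
    rw [Set.mem_image2] at hE
    obtain ⟨S1, hS1, S2, hS2, rfl⟩ := hE
    obtain ⟨a, rfl⟩ := hS1
    obtain ⟨F, hF, rfl⟩ := hS2
    have hb : ∀ i, ∃ cc, Iic cc = F i := fun i => hF i (mem_univ i)
    choose b hb using hb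
    have hFeq : Set.pi univ F = Set.pi univ fun i => Iic (b i) :=
      (Set.pi_congr rfl fun i _ => (hb i).symm)
    rw [hFeq, Measure.prod_prod]
    exact master a b
  · rw [measure_univ, measure_univ]
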